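/- Let S(d) denote the space of real symmetric d×d matrices and let G : S(d) → ℝ be monotonic and sublinear, i.e., (i) G(A) ≥ G(A') whenever A − A' is positive semidefinite; (ii) G(A + A') ≤ G(A) + G(A') for all A, A' ∈ S(d); (iii) G(λA) = λG(A) for all λ ≥ 0 and A ∈ S(d). Then there exists a nonempty, bounded, closed, convex subset Γ of the set S₊(d) of positive semidefinite symmetric d×d matrices such that G(A) = ½ · sup_{γ ∈ Γ} tr(γA) for every A ∈ S(d). Moreover, there then exists a constant C > 0 such that |G(A) − G(A')| ≤ C·‖A − A'‖ for all A, A' ∈ S(d). -/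

import Mathlib

attribute [local instance] Matrix.frobeniusNormedAddCommGroup

open Matrix

section Aux

variable {d : ℕ}

lemma isHermitian_of_isSymm' {A : Matrix (Fin d) (Fin d) ℝ} (h : A.IsSymm) :
    A.IsHermitian := by
  rw [Matrix.IsHermitian, conjTranspose_eq_transpose_of_trivial]; exact h

lemma isSymm_of_isHermitian' {A : Matrix (Fin d) (Fin d) ℝ} (h : A.IsHermitian) :
    A.IsSymm := by
  rw [Matrix.IsHermitian, conjTranspose_eq_transpose_of_trivial] at h; exact h

lemma stdBasisMatrix_transpose' (i j : Fin d) :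
    (Matrix.single i j (1:ℝ))ᵀ = Matrix.single j i (1:ℝ) := by
  ext a b
  simp [Matrix.single, Matrix.transpose_apply, and_comm]

/-- Frobenius norm squared is the sum of squares of entries. -/
lemma frob_sq (B : Matrix (Fin d) (Fin d) ℝ) :
    ‖B‖ ^ 2 = ∑ i, ∑ j, (B i j) ^ 2 := by
  have hS : (0:ℝ) ≤ ∑ i, ∑ j, (B i j) ^ 2 :=
    Finset.sum_nonneg fun i _ => Finset.sum_nonneg fun j _ => sq_nonneg _
  have h1 : ‖B‖ = (∑ i, ∑ j, (B i j) ^ 2) ^ ((1:ℝ)/2) := by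
    rw [frobenius_norm_def]
    congr 1
    refine Finset.sum_congr rfl fun i _ => Finset.sum_congr rfl fun j _ => ?_
    rw [Real.norm_eq_abs, show ((2:ℝ) = ((2:ℕ):ℝ)) by norm_num, Real.rpow_natCast, sq_abs]
  rw [h1, ← Real.rpow_natCast (_ ^ ((1:ℝ)/2)) 2, ← Real.rpow_mul hS]
  norm_num

/-- Cauchy–Schwarz bound for the quadratic form. -/
lemma quad_le (B : Matrix (Fin d) (Fin d) ℝ) (x : Fin d → ℝ) :
    x ⬝ᵥ B *ᵥ x ≤ ‖B‖ * ∑ i, x i ^ 2 := by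
  have hq : x ⬝ᵥ B *ᵥ x = ∑ p : Fin d × Fin d, (x p.1 * x p.2) * B p.1 p.2 := by
    rw [← Finset.univ_product_univ, Finset.sum_product]
    simp only [dotProduct, mulVec, dotProduct, Finset.mul_sum]
    exact Finset.sum_congr rfl fun i _ => Finset.sum_congr rfl fun j _ => by ring
  have hcs := Finset.sum_mul_sq_le_sq_mul_sq Finset.univ
    (fun p : Fin d × Fin d => x p.1 * x p.2) (fun p => B p.1 p.2)
  have h1 : ∑ p : Fin d × Fin d, (x p.1 * x p.2) ^ 2 = (∑ i, x i ^ 2) ^ 2 := by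
    rw [← Finset.univ_product_univ, Finset.sum_product, sq (∑ i, x i ^ 2), Finset.sum_mul_sum]
    exact Finset.sum_congr rfl fun i _ => Finset.sum_congr rfl fun j _ => by ring
  have h2 : ∑ p : Fin d × Fin d, (B p.1 p.2) ^ 2 = ‖B‖ ^ 2 := by
    rw [← Finset.univ_product_univ, Finset.sum_product, frob_sq]
  rw [hq]
  have hb : (∑ p : Fin d × Fin d, (x p.1 * x p.2) * B p.1 p.2) ^ 2
      ≤ (‖B‖ * ∑ i, x i ^ 2) ^ 2 := by
    calc (∑ p : Fin d × Fin d, (x p.1 * x p.2) * B p.1 p.2) ^ 2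
        ≤ (∑ i, x i ^ 2) ^ 2 * ‖B‖ ^ 2 := by rw [← h1, ← h2]; exact hcs
      _ = (‖B‖ * ∑ i, x i ^ 2) ^ 2 := by ring
  have hnn : (0:ℝ) ≤ ‖B‖ * ∑ i, x i ^ 2 :=
    mul_nonneg (norm_nonneg _) (Finset.sum_nonneg fun i _ => sq_nonneg _)
  calc ∑ p : Fin d × Fin d, (x p.1 * x p.2) * B p.1 p.2
      ≤ |∑ p : Fin d × Fin d, (x p.1 * x p.2) * B p.1 p.2| := le_abs_self _
    _ = Real.sqrt ((∑ p : Fin d × Fin d, (x p.1 * x p.2) * B p.1 p.2) ^ 2) :=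
        (Real.sqrt_sq_eq_abs _).symm
    _ ≤ Real.sqrt ((‖B‖ * ∑ i, x i ^ 2) ^ 2) := Real.sqrt_le_sqrt hb
    _ = |‖B‖ * ∑ i, x i ^ 2| := Real.sqrt_sq_eq_abs _
    _ = ‖B‖ * ∑ i, x i ^ 2 := abs_of_nonneg hnn

/-- `‖B‖ • 1 - B` is PSD for symmetric `B`. -/
lemma psd_norm_smul_one_sub (B : Matrix (Fin d) (Fin d) ℝ) (hB : B.IsSymm) :
    ((‖B‖ : ℝ) • (1 : Matrix (Fin d) (Fin d) ℝ) - B).PosSemidef := by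
  rw [posSemidef_iff_dotProduct_mulVec]
  constructor
  · refine isHermitian_of_isSymm' ?_
    rw [Matrix.IsSymm, transpose_sub, transpose_smul, transpose_one, hB]
  · intro x
    have h1 : star x ⬝ᵥ ((‖B‖:ℝ) • (1 : Matrix (Fin d) (Fin d) ℝ) - B) *ᵥ x
        = ‖B‖ * (∑ i, x i ^ 2) - x ⬝ᵥ B *ᵥ x := by
      have hxx : x ⬝ᵥ x = ∑ i, x i ^ 2 := by
        simp [dotProduct, pow_two]
      simp only [star_trivial, sub_mulVec, dotProduct_sub, smul_mulVec, one_mulVec,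
        dotProduct_smul, smul_eq_mul, hxx]
    rw [h1, sub_nonneg]
    exact quad_le B x

lemma vecMulVec_psd' (x : Fin d → ℝ) : (vecMulVec x x).PosSemidef := by
  rw [posSemidef_iff_dotProduct_mulVec]
  constructor
  · refine isHermitian_of_isSymm' ?_
    rw [Matrix.IsSymm]
    ext i j
    simp [vecMulVec, Matrix.transpose_apply, mul_comm]
  · intro y
    have h : star y ⬝ᵥ (vecMulVec x x) *ᵥ y = (∑ i, x i * y i) ^ 2 := by
      simp only [star_trivial, dotProduct, mulVec, vecMulVec, Matrix.of_apply, Finset.mul_sum]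
    -- fall back to explicit computation
      rw [sq, Finset.sum_mul_sum]
      exact Finset.sum_congr rfl fun i _ => Finset.sum_congr rfl fun j _ => by ring
    rw [h]
    exact sq_nonneg _

end Aux

theorem sublinear_function_representation (d : ℕ)
    (G : Matrix (Fin d) (Fin d) ℝ → ℝ)
    (hmono : ∀ A A' : Matrix (Fin d) (Fin d) ℝ, A.IsSymm → A'.IsSymm →
      (A - A').PosSemidef → G A' ≤ G A)
    (hsub : ∀ A A' : Matrix (Fin d) (Fin d) ℝ, A.IsSymm → A'.IsSymm →
      G (A + A') ≤ G A + G A')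
    (hhom : ∀ (lam : ℝ), 0 ≤ lam → ∀ A : Matrix (Fin d) (Fin d) ℝ, A.IsSymm →
      G (lam • A) = lam * G A) :
    (∃ Γ : Set (Matrix (Fin d) (Fin d) ℝ), Γ.Nonempty ∧
      (∀ γ ∈ Γ, γ.PosSemidef) ∧ Bornology.IsBounded Γ ∧ IsClosed Γ ∧ Convex ℝ Γ ∧
      ∀ A : Matrix (Fin d) (Fin d) ℝ, A.IsSymm →
        G A = (1 / 2) * sSup ((fun γ => (γ * A).trace) '' Γ)) ∧
    ∃ C : ℝ, 0 < C ∧ ∀ A A' : Matrix (Fin d) (Fin d) ℝ, A.IsSymm → A'.IsSymm →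
      |G A - G A'| ≤ C * ‖A - A'‖ := by
  -- symmetrization
  set sym : Matrix (Fin d) (Fin d) ℝ → Matrix (Fin d) (Fin d) ℝ :=
    fun A => (2⁻¹ : ℝ) • (A + Aᵀ) with hsymdef
  have hsym_symm : ∀ A, (sym A).IsSymm := by
    intro A
    rw [Matrix.IsSymm, hsymdef]
    simp only [transpose_smul, transpose_add, transpose_transpose]
    rw [add_comm]
  have hsym_of : ∀ A, A.IsSymm → sym A = A := by
    intro A hA
    rw [hsymdef]; simp only []
    rw [show Aᵀ = A from hA, ← two_smul ℝ A, smul_smul]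
    norm_num
  have hsym_add : ∀ A B, sym (A + B) = sym A + sym B := by
    intro A B; rw [hsymdef]; simp only [transpose_add, ← smul_add]
    congr 1
    abel
  have hsym_smul : ∀ (c : ℝ) A, sym (c • A) = c • sym A := by
    intro c A; rw [hsymdef]; simp only [transpose_smul, ← smul_add, smul_smul]
    rw [mul_comm]
  have hG0 : G 0 = 0 := by
    have := hhom 0 le_rfl 0 isSymm_zero
    simpa using this
  have hGpos : ∀ P, P.PosSemidef → 0 ≤ G P := by
    intro P hP
    have hPs : P.IsSymm := isSymm_of_isHermitian' hP.1
    have := hmono P 0 hPs isSymm_zero (by simpa using hP)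
    rwa [hG0] at this
  have hGneg : ∀ P, P.PosSemidef → G (-P) ≤ 0 := by
    intro P hP
    have hPs : P.IsSymm := isSymm_of_isHermitian' hP.1
    have hPs' : (-P).IsSymm := by rw [Matrix.IsSymm, transpose_neg, hPs]
    have := hmono 0 (-P) isSymm_zero hPs' (by simpa using hP)
    rwa [hG0] at this
  have hG1 : 0 ≤ G 1 := hGpos 1 Matrix.PosSemidef.one
  -- the sublinear functional on the whole matrix space
  set N : Matrix (Fin d) (Fin d) ℝ → ℝ := fun A => 2 * G (sym A) with hNdef
  have hN_hom : ∀ c : ℝ, 0 < c → ∀ A, N (c • A) = c * N A := by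
    intro c hc A
    rw [hNdef]; simp only []
    rw [hsym_smul, hhom c hc.le _ (hsym_symm A)]; ring
  have hN_add : ∀ A B, N (A + B) ≤ N A + N B := by
    intro A B
    rw [hNdef]; simp only []
    rw [hsym_add]
    have := hsub (sym A) (sym B) (hsym_symm A) (hsym_symm B)
    linarith
  have hN0 : N 0 = 0 := by
    rw [hNdef]; simp only []
    rw [hsym_of 0 isSymm_zero, hG0]; ring
  have hN_neg : ∀ A, -N (-A) ≤ N A := by
    intro A
    have := hN_add A (-A)
    rw [add_neg_cancel, hN0] at this
    linarith
  have hN_of_symm : ∀ A, A.IsSymm → N A = 2 * G A := by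
    intro A hA
    rw [hNdef]; simp only []
    rw [hsym_of A hA]
  -- Hahn-Banach step
  have hb : ∀ A₀ : Matrix (Fin d) (Fin d) ℝ, A₀.IsSymm → ∃ γ, γ.PosSemidef ∧
      (∀ A : Matrix (Fin d) (Fin d) ℝ, A.IsSymm → (γ * A).trace ≤ 2 * G A) ∧
      (γ * A₀).trace = 2 * G A₀ := by
    intro A₀ hA₀
    have hg : ∃ g : Matrix (Fin d) (Fin d) ℝ →ₗ[ℝ] ℝ, (∀ A, g A ≤ N A) ∧ g A₀ = N A₀ := by
      by_cases h0 : A₀ = 0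
      · obtain ⟨g, _, hg2⟩ := exists_extension_of_le_sublinear
          (⟨(⊥ : Submodule ℝ (Matrix (Fin d) (Fin d) ℝ)), 0⟩ : Matrix (Fin d) (Fin d) ℝ →ₗ.[ℝ] ℝ) N hN_hom hN_add
          (fun x => by
            obtain ⟨x, hx⟩ := x
            simp only [Submodule.mem_bot] at hx
            subst hx
            simp [hN0])
        exact ⟨g, hg2, by rw [h0, map_zero, hN0]⟩
      · obtain ⟨g, hg1, hg2⟩ := exists_extension_of_le_sublinear
          (LinearPMap.mkSpanSingleton A₀ (N A₀) h0) N hN_hom hN_add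
          (fun x => by
            obtain ⟨x, hx⟩ := x
            obtain ⟨t, rfl⟩ := Submodule.mem_span_singleton.mp hx
            rw [LinearPMap.mkSpanSingleton'_apply]
            rcases le_or_gt 0 t with ht | ht
            · rcases eq_or_lt_of_le ht with rfl | ht'
              · simp [hN0]
              · rw [hN_hom t ht', smul_eq_mul, RingHom.id_apply]
            · have h1 : N (t • A₀) = -t * N (-A₀) := by
                have he : t • A₀ = (-t) • (-A₀) := by rw [neg_smul, smul_neg, neg_neg]
                rw [he, hN_hom (-t) (by linarith)]
              rw [h1, smul_eq_mul, RingHom.id_apply]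
              have h2 := hN_neg A₀
              nlinarith)
        refine ⟨g, hg2, ?_⟩
        have hmem : A₀ ∈ (LinearPMap.mkSpanSingleton (σ := RingHom.id ℝ) A₀ (N A₀) h0).domain :=
          (Submodule.mem_span_singleton_self A₀ : A₀ ∈ Submodule.span ℝ {A₀})
        have := hg1 ⟨A₀, hmem⟩
        rwa [LinearPMap.mkSpanSingleton_apply] at this
    obtain ⟨g, hgle, hgA₀⟩ := hg
    have hg_skew : ∀ A, sym A = 0 → g A = 0 := by
      intro A hA
      have h1 : g A ≤ N A := hgle A
      have h2 : g (-A) ≤ N (-A) := hgle (-A)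
      have hNA : N A = 0 := by rw [hNdef]; simp only []; rw [hA, hG0]; ring
      have hsymneg : sym (-A) = 0 := by
        have he : sym (-A) = (-1 : ℝ) • sym A := by
          rw [← hsym_smul]; norm_num
        rw [he, hA, smul_zero]
      have hNA' : N (-A) = 0 := by rw [hNdef]; simp only []; rw [hsymneg, hG0]; ring
      rw [map_neg] at h2
      rw [hNA] at h1; rw [hNA'] at h2
      linarith
    have hg_sym : ∀ A, g A = g (sym A) := by
      intro A
      have h1 : sym (A - sym A) = 0 := by
        have he : A - sym A = A + (-1 : ℝ) • sym A := by
          rw [neg_one_smul]; abel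
        rw [he, hsym_add, hsym_smul, hsym_of (sym A) (hsym_symm A)]
        simp
      have h2 := hg_skew _ h1
      have h3 : g A - g (sym A) = 0 := by rw [← map_sub]; exact h2
      linarith
    -- the representing matrix
    set γ : Matrix (Fin d) (Fin d) ℝ := Matrix.of fun i j => g (Matrix.single j i 1)
      with hγdef
    have htr : ∀ A, (γ * A).trace = g A := by
      intro A
      have h1 : (γ * A).trace = ∑ i, ∑ j, γ i j * A j i := by
        simp [Matrix.trace, Matrix.mul_apply, Matrix.diag]
      rw [h1]
      conv_rhs => rw [matrix_eq_sum_single A]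
      rw [map_sum, Finset.sum_comm]
      refine Finset.sum_congr rfl fun i _ => ?_
      rw [map_sum]
      refine Finset.sum_congr rfl fun j _ => ?_
      have h2 : Matrix.single i j (A i j) = A i j • Matrix.single i j 1 := by
        rw [smul_single, smul_eq_mul, mul_one]
      rw [h2, _root_.map_smul, smul_eq_mul]
      show g (Matrix.single i j 1) * A i j = A i j * g (Matrix.single i j 1)
      ring
    have hγsymm : γ.IsSymm := by
      rw [Matrix.IsSymm]
      ext i j
      rw [Matrix.transpose_apply]
      show g (Matrix.single i j 1) = g (Matrix.single j i 1)
      rw [hg_sym (Matrix.single i j 1), hg_sym (Matrix.single j i 1)]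
      congr 1
      rw [hsymdef]; simp only []
      rw [stdBasisMatrix_transpose', stdBasisMatrix_transpose', add_comm]
    have hγpsd : γ.PosSemidef := by
      refine posSemidef_iff_dotProduct_mulVec.mpr ⟨isHermitian_of_isSymm' hγsymm, fun x => ?_⟩
      have h1 : star x ⬝ᵥ γ *ᵥ x = (γ * vecMulVec x x).trace := by
        have ha : (γ * vecMulVec x x).trace = ∑ i, ∑ j, γ i j * (x j * x i) := by
          simp [Matrix.trace, Matrix.mul_apply, Matrix.diag, vecMulVec]
        have hbb : star x ⬝ᵥ γ *ᵥ x = ∑ i, ∑ j, x i * (γ i j * x j) := by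
          simp only [star_trivial, dotProduct, mulVec, dotProduct, Finset.mul_sum]
        rw [ha, hbb]
        exact Finset.sum_congr rfl fun i _ => Finset.sum_congr rfl fun j _ => by ring
      rw [h1, htr]
      have hM := vecMulVec_psd' x
      have hMs : (vecMulVec x x).IsSymm := isSymm_of_isHermitian' hM.1
      have h2 : g (-(vecMulVec x x)) ≤ N (-(vecMulVec x x)) := hgle _
      have h3 : N (-(vecMulVec x x)) = 2 * G (-(vecMulVec x x)) := by
        refine hN_of_symm _ ?_
        rw [Matrix.IsSymm, transpose_neg, hMs]
      have h4 : G (-(vecMulVec x x)) ≤ 0 := hGneg _ hM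
      rw [map_neg] at h2
      rw [h3] at h2
      linarith
    refine ⟨γ, hγpsd, fun A hA => ?_, ?_⟩
    · rw [htr]
      calc g A ≤ N A := hgle A
        _ = 2 * G A := hN_of_symm A hA
    · rw [htr, hgA₀, hN_of_symm A₀ hA₀]
  -- the set Γ
  set Γ : Set (Matrix (Fin d) (Fin d) ℝ) :=
    {γ | γ.PosSemidef ∧ ∀ A, A.IsSymm → (γ * A).trace ≤ 2 * G A} with hΓdef
  obtain ⟨γ₁, hγ₁psd, hγ₁le, _⟩ := hb 1 isSymm_one
  have hγ₁mem : γ₁ ∈ Γ := ⟨hγ₁psd, hγ₁le⟩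
  -- domination by the norm
  have hdom : ∀ B : Matrix (Fin d) (Fin d) ℝ, B.IsSymm → G B ≤ ‖B‖ * G 1 := by
    intro B hB
    have hs1 : ((‖B‖ : ℝ) • (1 : Matrix (Fin d) (Fin d) ℝ)).IsSymm := by
      rw [Matrix.IsSymm, transpose_smul, transpose_one]
    have := hmono ((‖B‖ : ℝ) • 1) B hs1 hB (psd_norm_smul_one_sub B hB)
    calc G B ≤ G ((‖B‖ : ℝ) • 1) := this
      _ = ‖B‖ * G 1 := hhom _ (norm_nonneg _) _ isSymm_one
  constructor
  · refine ⟨Γ, ⟨γ₁, hγ₁mem⟩, fun γ hγ => hγ.1, ?_, ?_, ?_, ?_⟩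
    · -- bounded
      rw [isBounded_iff_forall_norm_le]
      refine ⟨2 * G 1, fun γ hγ => ?_⟩
      obtain ⟨hps, hle⟩ := hγ
      have hγs : γ.IsSymm := isSymm_of_isHermitian' hps.1
      have h1 : (γ * γ).trace = ‖γ‖ ^ 2 := by
        rw [frob_sq]
        simp only [Matrix.trace, Matrix.mul_apply, Matrix.diag]
        refine Finset.sum_congr rfl fun i _ => Finset.sum_congr rfl fun j _ => ?_
        rw [hγs.apply, sq]
      have h2 : ‖γ‖ ^ 2 ≤ 2 * G γ := by rw [← h1]; exact hle γ hγs
      have h3 : G γ ≤ ‖γ‖ * G 1 := hdom γ hγs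
      have h4 : ‖γ‖ ^ 2 ≤ ‖γ‖ * (2 * G 1) := by nlinarith
      rcases eq_or_lt_of_le (norm_nonneg γ) with h5 | h5
      · rw [← h5]; linarith
      · nlinarith
    · -- closed
      have hΓeq : Γ = ({γ : Matrix (Fin d) (Fin d) ℝ | γ.IsHermitian} ∩
          (⋂ x : Fin d → ℝ, {γ | 0 ≤ star x ⬝ᵥ γ *ᵥ x}) ∩
          ⋂ (A : Matrix (Fin d) (Fin d) ℝ), ⋂ (_ : A.IsSymm),
            {γ | (γ * A).trace ≤ 2 * G A}) := by
        ext γ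
        simp only [hΓdef, Set.mem_setOf_eq, Set.mem_inter_iff, Set.mem_iInter,
          posSemidef_iff_dotProduct_mulVec]
      rw [hΓeq]
      refine IsClosed.inter (IsClosed.inter ?_ ?_) ?_
      · exact isClosed_eq continuous_id.matrix_conjTranspose continuous_id
      · refine isClosed_iInter fun x => ?_
        exact isClosed_le continuous_const
          (continuous_const.dotProduct (continuous_id.matrix_mulVec continuous_const))
      · refine isClosed_iInter fun A => isClosed_iInter fun _ => ?_
        exact isClosed_le ((continuous_id.matrix_mul continuous_const).matrix_trace)
          continuous_const
    · -- convex
      rintro γ₁' ⟨h1psd, h1le⟩ γ₂' ⟨h2psd, h2le⟩ a b ha hb' hab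
      constructor
      · rw [posSemidef_iff_dotProduct_mulVec]
        constructor
        · have e1 : γ₁'ᴴ = γ₁' := h1psd.1
          have e2 : γ₂'ᴴ = γ₂' := h2psd.1
          show (a • γ₁' + b • γ₂')ᴴ = a • γ₁' + b • γ₂'
          rw [conjTranspose_add, conjTranspose_smul, conjTranspose_smul, e1, e2,
            star_trivial, star_trivial]
        · intro x
          have q1 := h1psd.dotProduct_mulVec_nonneg x
          have q2 := h2psd.dotProduct_mulVec_nonneg x
          have he : star x ⬝ᵥ (a • γ₁' + b • γ₂') *ᵥ x
              = a * (star x ⬝ᵥ γ₁' *ᵥ x) + b * (star x ⬝ᵥ γ₂' *ᵥ x) := by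
            rw [add_mulVec, dotProduct_add, smul_mulVec, smul_mulVec,
              dotProduct_smul, dotProduct_smul, smul_eq_mul, smul_eq_mul]
          rw [he]
          have := mul_nonneg ha q1
          have := mul_nonneg hb' q2
          linarith
      · intro A hA
        have he : ((a • γ₁' + b • γ₂') * A).trace
            = a * (γ₁' * A).trace + b * (γ₂' * A).trace := by
          rw [add_mul, smul_mul, smul_mul, trace_add, trace_smul, trace_smul,
            smul_eq_mul, smul_eq_mul]
        rw [he]
        have k1 := h1le A hA
        have k2 := h2le A hA
        calc a * (γ₁' * A).trace + b * (γ₂' * A).trace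
            ≤ a * (2 * G A) + b * (2 * G A) :=
              add_le_add (mul_le_mul_of_nonneg_left k1 ha)
                (mul_le_mul_of_nonneg_left k2 hb')
          _ = (a + b) * (2 * G A) := by ring
          _ = 2 * G A := by rw [hab, one_mul]
    · -- representation
      intro A hA
      obtain ⟨γA, hApsd, hAle, hAeq⟩ := hb A hA
      have hmemA : γA ∈ Γ := ⟨hApsd, hAle⟩
      have hne : ((fun γ => (γ * A).trace) '' Γ).Nonempty := ⟨_, ⟨γA, hmemA, rfl⟩⟩
      have hub : ∀ y ∈ (fun γ => (γ * A).trace) '' Γ, y ≤ 2 * G A := by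
        rintro y ⟨γ, hγ, rfl⟩
        exact hγ.2 A hA
      have hsup : sSup ((fun γ => (γ * A).trace) '' Γ) = 2 * G A := by
        refine le_antisymm (csSup_le hne hub) ?_
        have hbdd : BddAbove ((fun γ => (γ * A).trace) '' Γ) := ⟨2 * G A, hub⟩
        have hmem2 : (2 : ℝ) * G A ∈ (fun γ => (γ * A).trace) '' Γ :=
          ⟨γA, hmemA, hAeq⟩
        exact le_csSup hbdd hmem2
      rw [hsup]; ring
  · -- Lipschitz bound
    refine ⟨G 1 + 1, by linarith, fun A A' hA hA' => ?_⟩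
    have hkey : ∀ B B' : Matrix (Fin d) (Fin d) ℝ, B.IsSymm → B'.IsSymm →
        G B - G B' ≤ (G 1 + 1) * ‖B - B'‖ := by
      intro B B' hB hB'
      have hs : (B - B').IsSymm := by
        rw [Matrix.IsSymm, transpose_sub, hB, hB']
      have h1 : G B ≤ G (B - B') + G B' := by
        have := hsub (B - B') B' hs hB'
        rwa [sub_add_cancel] at this
      have h2 : G (B - B') ≤ ‖B - B'‖ * G 1 := hdom _ hs
      have h3 : ‖B - B'‖ * G 1 ≤ (G 1 + 1) * ‖B - B'‖ := by
        rw [mul_comm]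
        have := norm_nonneg (B - B')
        nlinarith
      linarith
    rw [abs_sub_le_iff]
    constructor
    · exact hkey A A' hA hA'
    · have := hkey A' A hA' hA
      rwa [norm_sub_rev] at this
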